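/- Let (f_k)_{k∈ℕ} be a frame sequence in H with frame operator S = T T*, and let S† be the Moore-Penrose pseudoinverse of S. Then for every f ∈ H, Pf = ∑_k ⟨f, S†f_k⟩ f_k, with the series converging in H. -/

import Mathlib

/- Setting: `H` is a complex Hilbert space, `ℓ2` is the Hilbert space of square-summable
complex sequences with standard orthonormal basis `lp.single 2 k 1`. -/

noncomputable section

abbrev ℓ2 : Type := lp (fun _ : ℕ => ℂ) 2

variable {H : Type} [NormedAddCommGroup H] [InnerProductSpace ℂ H] [CompleteSpace H]

/-- The closed linear span `V` of the set of values of the sequence `f`. -/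
def spanClosure (f : ℕ → H) : Submodule ℂ H :=
  (Submodule.span ℂ (Set.range f)).topologicalClosure

instance (f : ℕ → H) : CompleteSpace (spanClosure f) :=
  Submodule.topologicalClosure.completeSpace _

/-- `f` is a frame sequence with frame bounds `A`, `B`:  the frame inequality
`A‖g‖² ≤ ∑ₖ |⟨g, fₖ⟩|² ≤ B‖g‖²` holds for every `g` in the closed linear span `V` of the `fₖ`.
(In Mathlib's convention, the paper's `⟨g, fₖ⟩`, linear in the first argument, is `⟪fₖ, g⟫`.) -/
def IsFrameSeqWith (f : ℕ → H) (A B : ℝ) : Prop :=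
  0 < A ∧ 0 < B ∧
    ∀ g ∈ spanClosure f,
      Summable (fun k => ‖(inner ℂ (f k) g : ℂ)‖ ^ 2) ∧
      A * ‖g‖ ^ 2 ≤ ∑' k, ‖(inner ℂ (f k) g : ℂ)‖ ^ 2 ∧
      (∑' k, ‖(inner ℂ (f k) g : ℂ)‖ ^ 2) ≤ B * ‖g‖ ^ 2

/-- The orthogonal projection `P` of `H` onto `V`, as an operator `H → H`. -/
def projV (f : ℕ → H) : H →L[ℂ] H :=
  (spanClosure f).subtypeL ∘L Submodule.orthogonalProjection (spanClosure f)

/-- `Ad` is the Moore–Penrose pseudoinverse of the bounded operator `A`: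
`A A† A = A`, `A† A A† = A†`, `(A A†)* = A A†` and `(A† A)* = A† A`. -/
def IsMoorePenrose {E F : Type} [NormedAddCommGroup E] [InnerProductSpace ℂ E] [CompleteSpace E]
    [NormedAddCommGroup F] [InnerProductSpace ℂ F] [CompleteSpace F]
    (A : E →L[ℂ] F) (Ad : F →L[ℂ] E) : Prop :=
  A ∘L Ad ∘L A = A ∧ Ad ∘L A ∘L Ad = Ad ∧
  ContinuousLinearMap.adjoint (A ∘L Ad) = A ∘L Ad ∧
  ContinuousLinearMap.adjoint (Ad ∘L A) = Ad ∘L A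

private lemma comp_eq_mul {H : Type} [NormedAddCommGroup H] [InnerProductSpace ℂ H]
    (A B : H →L[ℂ] H) : A ∘L B = A * B := rfl

open ContinuousLinearMap in
private lemma adj_mul (A B : H →L[ℂ] H) : adjoint (A * B) = adjoint B * adjoint A :=
  adjoint_comp A B

open ContinuousLinearMap in
/-- Uniqueness of the Moore-Penrose pseudoinverse. -/
private lemma mp_unique (Op B C : H →L[ℂ] H)
    (hB : IsMoorePenrose Op B) (hC : IsMoorePenrose Op C) : B = C := by
  obtain ⟨hB1, hB2, hB3, hB4⟩ := hB
  obtain ⟨hC1, hC2, hC3, hC4⟩ := hC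
  simp only [comp_eq_mul] at hB1 hB2 hB3 hB4 hC1 hC2 hC3 hC4
  have e1 : adjoint Op = adjoint Op * adjoint C * adjoint Op := by
    conv_lhs => rw [← hC1]
    rw [adj_mul, adj_mul, mul_assoc]
  have hAB : Op * B = Op * C := by
    calc Op * B = adjoint (Op * B) := hB3.symm
    _ = adjoint B * adjoint Op := adj_mul _ _
    _ = adjoint B * (adjoint Op * adjoint C * adjoint Op) := by rw [← e1]
    _ = (adjoint B * adjoint Op) * (adjoint C * adjoint Op) := by simp only [mul_assoc]
    _ = adjoint (Op * B) * adjoint (Op * C) := by rw [adj_mul, adj_mul]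
    _ = (Op * B) * (Op * C) := by rw [hB3, hC3]
    _ = (Op * (B * Op)) * C := by simp only [mul_assoc]
    _ = Op * C := by rw [hB1]
  have hBA : B * Op = C * Op := by
    calc B * Op = adjoint (B * Op) := hB4.symm
    _ = adjoint Op * adjoint B := adj_mul _ _
    _ = (adjoint Op * adjoint C * adjoint Op) * adjoint B := by conv_lhs => rw [e1]
    _ = (adjoint Op * adjoint C) * (adjoint Op * adjoint B) := by simp only [mul_assoc]
    _ = adjoint (C * Op) * adjoint (B * Op) := by rw [adj_mul, adj_mul]
    _ = (C * Op) * (B * Op) := by rw [hC4, hB4]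
    _ = C * (Op * (B * Op)) := by simp only [mul_assoc]
    _ = C * Op := by rw [hB1]
  calc B = B * (Op * B) := hB2.symm
  _ = (B * Op) * B := by simp only [mul_assoc]
  _ = (C * Op) * B := by rw [hBA]
  _ = C * (Op * B) := by simp only [mul_assoc]
  _ = C * (Op * C) := by rw [hAB]
  _ = C := hC2

open ContinuousLinearMap in
private lemma mp_adjoint (Op B : H →L[ℂ] H) (h : IsMoorePenrose Op B) :
    IsMoorePenrose (adjoint Op) (adjoint B) := by
  obtain ⟨h1, h2, h3, h4⟩ := h
  simp only [comp_eq_mul] at h1 h2 h3 h4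
  simp only [IsMoorePenrose, comp_eq_mul]
  refine ⟨?_, ?_, ?_, ?_⟩
  · rw [← adj_mul, ← adj_mul]
    simp only [mul_assoc]
    rw [h1]
  · rw [← adj_mul, ← adj_mul]
    simp only [mul_assoc]
    rw [h2]
  · rw [← adj_mul, adjoint_adjoint, h4]
  · rw [← adj_mul, adjoint_adjoint, h3]

/-- for a frame sequence with frame operator `S = T T*` and `S†` the
Moore-Penrose pseudoinverse of `S`: for every `g ∈ H`, `Pg = ∑ₖ ⟨g, S†fₖ⟩ fₖ`,
the series converging in `H`.  (The paper's `⟨g, S†fₖ⟩`, linear in the first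
argument, is Mathlib's `⟪S†fₖ, g⟫`.) -/
theorem stmt10 (f : ℕ → H) (A B : ℝ) (hF : IsFrameSeqWith f A B)
    (T : ℓ2 →L[ℂ] H) (hT : ∀ c : ℓ2, HasSum (fun k => c k • f k) (T c))
    (S : H →L[ℂ] H) (hS : S = T ∘L ContinuousLinearMap.adjoint T)
    (Sdag : H →L[ℂ] H) (hSdag : IsMoorePenrose S Sdag) (g : H) :
    HasSum (fun k => (inner ℂ (Sdag (f k)) g : ℂ) • f k) (projV f g) := by
  classical
  -- `S` is self-adjoint
  have hSsa : ContinuousLinearMap.adjoint S = S := by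
    rw [hS, ContinuousLinearMap.adjoint_comp, ContinuousLinearMap.adjoint_adjoint]
  -- `Sdag` is self-adjoint
  have hSdsa : ContinuousLinearMap.adjoint Sdag = Sdag := by
    refine mp_unique S _ _ ?_ hSdag
    have := mp_adjoint S Sdag hSdag
    rwa [hSsa] at this
  -- `T` applied to basis vectors
  have hTek : ∀ k : ℕ, T (lp.single 2 k (1 : ℂ)) = f k := by
    intro k
    refine (hT (lp.single 2 k (1 : ℂ))).unique ?_
    have : ∀ j : ℕ, (lp.single 2 k (1 : ℂ) : ℓ2) j • f j
        = if j = k then f k else 0 := by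
      intro j
      by_cases hj : j = k
      · subst hj; simp [lp.single_apply_self]
      · simp [lp.single_apply_ne _ _ _ hj, hj]
    rw [funext this]
    exact hasSum_ite_eq k (f k)
  -- coordinates of `adjoint T`
  have hTadjc : ∀ (h : H) (k : ℕ),
      ((ContinuousLinearMap.adjoint T h : ℓ2) k) = (inner ℂ (f k) h : ℂ) := by
    intro h k
    have h1 : ((ContinuousLinearMap.adjoint T h : ℓ2) k)
        = (inner ℂ (lp.single 2 k (1 : ℂ) : ℓ2) (ContinuousLinearMap.adjoint T h) : ℂ) := by
      rw [lp.inner_single_left]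
      simp
    rw [h1, ContinuousLinearMap.adjoint_inner_right, hTek]
  -- range of `T` lies in the closed span
  have hTmem : ∀ c : ℓ2, T c ∈ spanClosure f := by
    intro c
    have hsum := (hT c).tendsto_sum_nat
    have hcl : T c ∈ closure ((Submodule.span ℂ (Set.range f) : Submodule ℂ H) : Set H) := by
      refine mem_closure_of_tendsto ((hT c) : Filter.Tendsto _ Filter.atTop (nhds (T c)))
        (Filter.Eventually.of_forall fun s => ?_)
      exact Submodule.sum_mem _ fun k _ =>
        Submodule.smul_mem _ _ (Submodule.subset_span ⟨k, rfl⟩)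
    rwa [← Submodule.topologicalClosure_coe] at hcl
  -- `S` maps into `V`
  have hSmem : ∀ x : H, S x ∈ spanClosure f := by
    intro x; rw [hS]; exact hTmem _
  -- every element of the range of `S` is fixed by `S ∘ Sdag`
  have hrange : ∀ x : H, S (Sdag (S x)) = S x := by
    intro x
    calc S (Sdag (S x)) = (S ∘L Sdag ∘L S) x := rfl
    _ = S x := by rw [hSdag.1]
  -- every element of `V` is fixed by `S ∘ Sdag`
  have hfix : ∀ v ∈ spanClosure f, S (Sdag v) = v := by
    have hclosed : IsClosed {x : H | S (Sdag x) = x} :=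
      isClosed_eq (S.continuous.comp Sdag.continuous) continuous_id
    set W : Submodule ℂ H := (spanClosure f).map (S : H →ₗ[ℂ] H) with hW
    have hWsub : (W : Set H) ⊆ {x : H | S (Sdag x) = x} := by
      rintro _ ⟨x, _, rfl⟩
      exact hrange x
    intro v hv
    have hdense : v ∈ Wᗮᗮ := by
      rw [Submodule.mem_orthogonal]
      intro u hu
      set uV : H := (Submodule.orthogonalProjection (spanClosure f) u : H) with huVdef
      have huV : uV ∈ spanClosure f := (Submodule.orthogonalProjection (spanClosure f) u).2
      have hperp : u - uV ∈ (spanClosure f)ᗮ :=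
        Submodule.sub_starProjection_mem_orthogonal (K := spanClosure f) u
      have hSuVW : S uV ∈ W := ⟨uV, huV, rfl⟩
      have h1 : (inner ℂ (S uV) u : ℂ) = 0 :=
        Submodule.inner_right_of_mem_orthogonal hSuVW hu
      have h2 : (inner ℂ (S uV) (u - uV) : ℂ) = 0 :=
        Submodule.inner_right_of_mem_orthogonal (hSmem uV) hperp
      have h3 : (inner ℂ (S uV) uV : ℂ) = 0 := by
        rw [inner_sub_right, h1, zero_sub, neg_eq_zero] at h2
        exact h2
      have h4 : ContinuousLinearMap.adjoint T uV = 0 := by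
        rw [← inner_self_eq_zero (𝕜 := ℂ)]
        rw [ContinuousLinearMap.adjoint_inner_left]
        have hTS : T (ContinuousLinearMap.adjoint T uV) = S uV := by rw [hS]; rfl
        rw [hTS]
        exact inner_eq_zero_symm.mpr h3
      have h5 : ∀ k : ℕ, (inner ℂ (f k) uV : ℂ) = 0 := by
        intro k
        rw [← hTadjc, h4]
        rfl
      have h6 : uV = 0 := by
        obtain ⟨hA, hB0, hfr⟩ := hF
        have hle := (hfr uV huV).2.1
        have hzero : (∑' k : ℕ, ‖(inner ℂ (f k) uV : ℂ)‖ ^ 2) = 0 := by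
          simp [h5]
        rw [hzero] at hle
        have hnn : 0 ≤ ‖uV‖ ^ 2 := sq_nonneg _
        have : ‖uV‖ ^ 2 = 0 := by nlinarith
        have : ‖uV‖ = 0 := by
          have := sq_eq_zero_iff.mp this
          exact this
        exact norm_eq_zero.mp this
      have huperp : u ∈ (spanClosure f)ᗮ := by
        rw [h6, sub_zero] at hperp
        exact hperp
      exact Submodule.inner_left_of_mem_orthogonal hv huperp
    rw [Submodule.orthogonal_orthogonal_eq_closure] at hdense
    exact closure_minimal hWsub hclosed hdense
  -- `S (Sdag g)` is the orthogonal projection of `g`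
  have hMsa : ContinuousLinearMap.adjoint (S ∘L Sdag) = S ∘L Sdag := hSdag.2.2.1
  have hproj : (Submodule.orthogonalProjection (spanClosure f) g : H) = S (Sdag g) := by
    refine Submodule.eq_starProjection_of_mem_of_inner_eq_zero (hSmem _) fun w hw => ?_
    have h1 : (inner ℂ (S (Sdag g)) w : ℂ) = (inner ℂ g w : ℂ) := by
      have : (inner ℂ ((S ∘L Sdag) g) w : ℂ) = (inner ℂ g ((S ∘L Sdag) w) : ℂ) := by
        conv_lhs => rw [← hMsa]
        rw [ContinuousLinearMap.adjoint_inner_left]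
      have h2 : (S ∘L Sdag) w = w := hfix w hw
      rw [h2] at this
      exact this
    rw [inner_sub_left, h1, sub_self]
  -- conclude
  have key := hT (ContinuousLinearMap.adjoint T (Sdag g))
  have hcoef : (fun k => (inner ℂ (Sdag (f k)) g : ℂ) • f k)
      = fun k => ((ContinuousLinearMap.adjoint T (Sdag g) : ℓ2) k) • f k := by
    funext k
    congr 1
    rw [hTadjc]
    conv_rhs => rw [← hSdsa]
    rw [ContinuousLinearMap.adjoint_inner_right]
  have hval : T (ContinuousLinearMap.adjoint T (Sdag g)) = projV f g := by
    have hTS : T (ContinuousLinearMap.adjoint T (Sdag g)) = S (Sdag g) := by rw [hS]; rfl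
    rw [hTS]
    show _ = ((spanClosure f).subtypeL ∘L Submodule.orthogonalProjection (spanClosure f)) g
    simp only [ContinuousLinearMap.coe_comp', Function.comp_apply, Submodule.subtypeL_apply]
    exact hproj.symm
  rw [hcoef, ← hval]
  exact key

end
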